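/- Let G be a finite abelian group and k a field of characteristic zero. Define φ(X) = Σ_{H ∈ [s(G)]} (1/|N_G(H)|)|X^H| on kB(G). Then the determinant of the bilinear form b(X,Y) = φ(XY) in the basis of transitive G-sets equals Π_{H ∈ [s(G)]} |N_G(H)|/|H|² = 1. -/

import Mathlib

open MulAction Matrix

section Duality

instance hasEnoughRootsComplex (A : Type*) [CommGroup A] [Finite A] :
    HasEnoughRootsOfUnity ℂ (Monoid.exponent A) := by
  have : NeZero ((Monoid.exponent A : ℕ) : ℂ) :=
    ⟨Nat.cast_ne_zero.mpr (Monoid.exponent_ne_zero_of_finite)⟩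
  infer_instance

variable {G : Type*} [CommGroup G] [Fintype G]

/-- The annihilator of a subgroup `H` in the character group of `G`. -/
def annihilatorSubgroup (H : Subgroup G) : Subgroup (G →* ℂˣ) where
  carrier := {φ | ∀ h ∈ H, φ h = 1}
  one_mem' := by intro h hh; simp
  mul_mem' := by intro a b ha hb h hh; simp [ha h hh, hb h hh]
  inv_mem' := by intro a ha h hh; simp [ha h hh]

noncomputable def annihilatorEquiv (H : Subgroup G) :
    ((G ⧸ H) →* ℂˣ) ≃ annihilatorSubgroup H where
  toFun ψ := ⟨ψ.comp (QuotientGroup.mk' H), by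
    intro h hh
    simp only [MonoidHom.comp_apply, QuotientGroup.mk'_apply]
    rw [(QuotientGroup.eq_one_iff h).mpr hh, _root_.map_one]⟩
  invFun φ := QuotientGroup.lift H φ.1 (fun h hh => φ.2 h hh)
  left_inv ψ := by ext x; rfl
  right_inv φ := by ext x; rfl

lemma card_annihilator (H : Subgroup G) :
    Nat.card (annihilatorSubgroup H) = Nat.card (G ⧸ H) := by
  rw [← Nat.card_congr (annihilatorEquiv H)]
  exact Nat.card_congr
    (CommGroup.monoidHom_mulEquiv_of_hasEnoughRootsOfUnity (G ⧸ H) ℂ).some.toEquiv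

lemma le_of_annihilator_le {H K : Subgroup G}
    (h : annihilatorSubgroup H ≤ annihilatorSubgroup K) : K ≤ H := by
  intro k hk
  by_contra hkH
  have h1 : (k : G ⧸ H) ≠ 1 := fun e => hkH ((QuotientGroup.eq_one_iff k).mp e)
  obtain ⟨ψ, hψ⟩ := CommGroup.exists_apply_ne_one_of_hasEnoughRootsOfUnity (G ⧸ H) ℂ h1
  have hmem : ψ.comp (QuotientGroup.mk' H) ∈ annihilatorSubgroup H := by
    intro x hx
    simp only [MonoidHom.comp_apply, QuotientGroup.mk'_apply]
    rw [(QuotientGroup.eq_one_iff x).mpr hx, _root_.map_one]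
  exact hψ (h hmem k hk)

lemma annihilator_injective : Function.Injective (annihilatorSubgroup (G := G)) := by
  intro H K e
  exact le_antisymm (le_of_annihilator_le e.ge) (le_of_annihilator_le e.le)

lemma prod_card_quotient [Fintype (Subgroup G)] :
    ∏ H : Subgroup G, Nat.card (G ⧸ H) = ∏ H : Subgroup G, Nat.card H := by
  classical
  obtain ⟨e⟩ := CommGroup.monoidHom_mulEquiv_of_hasEnoughRootsOfUnity G ℂ
  set σ : Subgroup G → Subgroup G :=
    fun H => (annihilatorSubgroup H).map e.toMonoidHom with hσ
  have hinj : Function.Injective σ :=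
    (Subgroup.map_injective e.injective).comp annihilator_injective
  have hbij : Function.Bijective σ := (Finite.injective_iff_bijective).mp hinj
  refine Fintype.prod_bijective σ hbij _ _ fun H => ?_
  rw [← card_annihilator H]
  exact Nat.card_congr
    (Subgroup.equivMapOfInjective (annihilatorSubgroup H) e.toMonoidHom e.injective).toEquiv

end Duality

section FixedPoints

variable {G : Type*} [CommGroup G] [Fintype G]

omit [Fintype G] in
lemma smul_coset' (L H : Subgroup G) (l : L) (g : G) :
    l • ((g : G ⧸ H)) = ((l * g : G) : G ⧸ H) := rfl

omit [Fintype G] in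
lemma coset_fixed_iff (L H : Subgroup G) (g : G) :
    (g : G ⧸ H) ∈ fixedPoints L (G ⧸ H) ↔ L ≤ H := by
  simp only [mem_fixedPoints, smul_coset', QuotientGroup.eq]
  constructor
  · intro h l hl
    have := h ⟨l, hl⟩
    simpa [mul_comm, mul_assoc] using this
  · intro h l
    have : (l : G) ∈ H := h l.2
    simpa [mul_comm, mul_assoc] using H.inv_mem this

lemma card_fixedPoints_quot (L H : Subgroup G) [Decidable (L ≤ H)] :
    Nat.card (fixedPoints L (G ⧸ H)) = if L ≤ H then Nat.card (G ⧸ H) else 0 := by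
  split_ifs with hLH
  · have he : fixedPoints L (G ⧸ H) = Set.univ := by
      ext x
      induction x using QuotientGroup.induction_on with
      | H g => simpa only [coset_fixed_iff, Set.mem_univ, iff_true] using hLH
    rw [he]
    simp [Nat.card_congr (Equiv.Set.univ _)]
  · have he : fixedPoints L (G ⧸ H) = ∅ := by
      ext x
      induction x using QuotientGroup.induction_on with
      | H g => simpa only [coset_fixed_iff, Set.mem_empty_iff_false, iff_false] using hLH
    rw [he]
    simp

omit [Fintype G] in
lemma card_fixedPoints_prod (L : Subgroup G) (α β : Type*) [MulAction G α] [MulAction G β] :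
    Nat.card (fixedPoints L (α × β)) =
      Nat.card (fixedPoints L α) * Nat.card (fixedPoints L β) := by
  rw [← Nat.card_prod]
  refine Nat.card_congr ⟨fun x => ⟨⟨x.1.1, fun l => congrArg Prod.fst (x.2 l)⟩,
    ⟨x.1.2, fun l => congrArg Prod.snd (x.2 l)⟩⟩,
    fun x => ⟨⟨x.1.1, x.2.1⟩, fun l => Prod.ext (x.1.2 l) (x.2.2 l)⟩, fun x => rfl, fun x => rfl⟩

end FixedPoints

section MatrixPart

variable {G : Type*} [CommGroup G] [Fintype G] [Fintype (Subgroup G)] [DecidableEq (Subgroup G)]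

omit [Fintype G] [Fintype (Subgroup G)] [DecidableEq (Subgroup G)] in
lemma card_normalizer_comm (L : Subgroup G) : Nat.card (Subgroup.normalizer (L : Set G)) = Nat.card G := by
  rw [Subgroup.normalizer_eq_top_iff.mpr inferInstance]
  exact Subgroup.card_top

omit [Fintype G] in
lemma det_zeta [∀ L H : Subgroup G, Decidable (L ≤ H)] : (Matrix.of fun L H : Subgroup G =>
    if L ≤ H then (1 : ℚ) else 0).det = 1 := by
  set Z : Matrix (Subgroup G) (Subgroup G) ℚ :=
    Matrix.of fun L H => if L ≤ H then (1 : ℚ) else 0 with hZ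
  let e : Subgroup G ≃ LinearExtension (Subgroup G) := Equiv.cast rfl
  haveI : Fintype (LinearExtension (Subgroup G)) := Fintype.ofEquiv _ e
  haveI : DecidableEq (LinearExtension (Subgroup G)) := fun a b =>
    decidable_of_iff (e.symm a = e.symm b) e.symm.injective.eq_iff
  have he : ∀ a : Subgroup G, e a = toLinearExtension a := fun a => rfl
  have h1 : ((Matrix.reindex e e) Z).det = Z.det := Matrix.det_reindex_self e Z
  have htri : (Matrix.reindex e e Z).BlockTriangular id := by
    intro i j hij
    simp only [Matrix.reindex_apply, Matrix.submatrix_apply, hZ, Matrix.of_apply]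
    rw [if_neg]
    intro hle
    have := toLinearExtension.monotone hle
    rw [← he, ← he, e.apply_symm_apply, e.apply_symm_apply] at this
    exact absurd hij (not_lt_of_ge this)
  have h2 : ((Matrix.reindex e e) Z).det = 1 := by
    rw [Matrix.det_of_upperTriangular htri]
    refine Finset.prod_eq_one fun i _ => ?_
    simp [hZ]
  convert h1.symm.trans h2 using 2

end MatrixPart

/-- Let `G` be a finite abelian group and `k = ℚ`. For the linear form
`φ(X) = ∑_{H ≤ G} (1/|N_G(H)|) |X^H|` on the Burnside algebra (for abelian `G` all
subgroups are their own conjugacy class), the Gram matrix of `b(X,Y) = φ(X·Y)` in the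
basis of transitive `G`-sets has determinant `∏_{H ≤ G} |N_G(H)|/|H|²`, which equals `1`. -/
theorem det_gram_abelian (G : Type*) [CommGroup G] [Fintype G]
    [Fintype (Subgroup G)] [DecidableEq (Subgroup G)] :
    (Matrix.det (Matrix.of fun H K : Subgroup G =>
        ∑ L : Subgroup G, (1 / (Nat.card (Subgroup.normalizer (L : Set G)) : ℚ)) *
          (Nat.card (MulAction.fixedPoints L ((G ⧸ H) × (G ⧸ K))) : ℚ)) =
      ∏ H : Subgroup G, (Nat.card (Subgroup.normalizer (H : Set G)) : ℚ) / (Nat.card H : ℚ) ^ 2) ∧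
    Matrix.det (Matrix.of fun H K : Subgroup G =>
        ∑ L : Subgroup G, (1 / (Nat.card (Subgroup.normalizer (L : Set G)) : ℚ)) *
          (Nat.card (MulAction.fixedPoints L ((G ⧸ H) × (G ⧸ K))) : ℚ)) = 1 := by
  classical
  set cG : ℚ := (Nat.card G : ℚ) with hcG
  have hcG0 : cG ≠ 0 := by
    simp [hcG, Nat.card_pos.ne']
  have hcH0 : ∀ H : Subgroup G, (Nat.card H : ℚ) ≠ 0 := fun H => by
    simp [Nat.card_pos.ne']
  have hcq0 : ∀ H : Subgroup G, (Nat.card (G ⧸ H) : ℚ) ≠ 0 := fun H => by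
    simp [Nat.card_pos.ne']
  have hfact : ∀ H : Subgroup G, cG = (Nat.card (G ⧸ H) : ℚ) * (Nat.card H : ℚ) := by
    intro H
    rw [hcG, Subgroup.card_eq_card_quotient_mul_card_subgroup H]
    push_cast
    ring
  set A : Matrix (Subgroup G) (Subgroup G) ℚ :=
    Matrix.of (fun L H => if L ≤ H then (Nat.card (G ⧸ H) : ℚ) else 0) with hA
  have hM : (Matrix.of fun H K : Subgroup G =>
        ∑ L : Subgroup G, (1 / (Nat.card (Subgroup.normalizer (L : Set G)) : ℚ)) *
          (Nat.card (MulAction.fixedPoints L ((G ⧸ H) × (G ⧸ K))) : ℚ)) =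
      cG⁻¹ • (Aᵀ * A) := by
    ext H K
    simp only [Matrix.smul_apply, Matrix.mul_apply, Matrix.transpose_apply, Matrix.of_apply,
      smul_eq_mul, Finset.mul_sum]
    refine Finset.sum_congr rfl fun L _ => ?_
    rw [card_normalizer_comm, card_fixedPoints_prod]
    erw [card_fixedPoints_quot L H, card_fixedPoints_quot L K]
    push_cast [apply_ite (Nat.cast : ℕ → ℚ)]
    rw [one_div]
    simp only [hA, Matrix.of_apply, hcG]
  have hdetA : A.det = ∏ H : Subgroup G, (Nat.card (G ⧸ H) : ℚ) := by
    have : A = (Matrix.of fun L H : Subgroup G => if L ≤ H then (1 : ℚ) else 0) *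
        Matrix.diagonal (fun H : Subgroup G => (Nat.card (G ⧸ H) : ℚ)) := by
      ext L H
      rw [hA, Matrix.mul_apply]
      simp only [Matrix.of_apply, Matrix.diagonal_apply, mul_ite, mul_one, mul_zero,
        Finset.sum_ite_eq', Finset.mem_univ, if_true, ite_mul, one_mul, zero_mul]
    rw [this, Matrix.det_mul, det_zeta, Matrix.det_diagonal, one_mul]
  have hdet : (Matrix.of fun H K : Subgroup G =>
        ∑ L : Subgroup G, (1 / (Nat.card (Subgroup.normalizer (L : Set G)) : ℚ)) *
          (Nat.card (MulAction.fixedPoints L ((G ⧸ H) × (G ⧸ K))) : ℚ)).det =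
      ∏ H : Subgroup G, cG / (Nat.card H : ℚ) ^ 2 := by
    rw [hM, Matrix.det_smul, Matrix.det_mul, Matrix.det_transpose, hdetA,
      ← Finset.card_univ, ← Finset.prod_const, ← Finset.prod_mul_distrib,
      ← Finset.prod_mul_distrib]
    refine Finset.prod_congr rfl fun H _ => ?_
    rw [hfact H]
    field_simp
  constructor
  · rw [hdet]
    refine Finset.prod_congr rfl fun H _ => ?_
    rw [card_normalizer_comm]
  · rw [hdet]
    have : ∀ H : Subgroup G, cG / (Nat.card H : ℚ) ^ 2 =
        (Nat.card (G ⧸ H) : ℚ) / (Nat.card H : ℚ) := by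
      intro H
      rw [hfact H]
      field_simp
    rw [Finset.prod_congr rfl fun H _ => this H, Finset.prod_div_distrib]
    rw [div_eq_one_iff_eq (Finset.prod_ne_zero_iff.mpr fun H _ => hcH0 H)]
    rw [← Nat.cast_prod, ← Nat.cast_prod, prod_card_quotient]
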